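/- Krein-type resolvent formula: let A be a densely defined closed symmetric operator in H with trace map T = (Γ₀, Γ₁) on D ⊆ dom(A*) satisfying the abstract Green identity and having dense range, and let A₁, A₂ be self-adjoint extensions of A with domains contained in D. Then for every ζ ∉ Spec(A₁) ∪ Spec(A₂), writing Rⱼ(ζ) = (Aⱼ − ζ)⁻¹, one has R₂(ζ) − R₁(ζ) = (T R₂(ζ̄))* J (T R₁(ζ)), where T Rⱼ(ζ̄) ∈ B(H, 𝔥 × 𝔥) and J(f₁,f₂) = (f₂, −f₁). -/
import Mathlib


open scoped InnerProductSpace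
open ContinuousLinearMap

/-- The operator `J(f₁,f₂) = (f₂, −f₁)` on `𝔥 ×₂ 𝔥`. -/
noncomputable def Jsymp (𝔥 : Type*)
    [NormedAddCommGroup 𝔥] [InnerProductSpace ℂ 𝔥] [CompleteSpace 𝔥] :
    WithLp 2 (𝔥 × 𝔥) →L[ℂ] WithLp 2 (𝔥 × 𝔥) :=
  ((WithLp.prodContinuousLinearEquiv 2 ℂ 𝔥 𝔥).symm.toContinuousLinearMap) ∘L
    (((ContinuousLinearMap.snd ℂ 𝔥 𝔥).prod (-(ContinuousLinearMap.fst ℂ 𝔥 𝔥))) ∘L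
      (WithLp.prodContinuousLinearEquiv 2 ℂ 𝔥 𝔥).toContinuousLinearMap)

/-- **symplectic Krein-type resolvent formula.**
Let `A` be a densely defined closed symmetric operator in `H` with trace map
`T = (Γ₀, Γ₁)` on `D ⊆ dom A*` satisfying the abstract Green identity and having dense
range, and let `A₁, A₂` be self-adjoint extensions of `A` with domains contained in `D`.
Then for every `ζ ∉ Spec A₁ ∪ Spec A₂`, writing `Rⱼ(ζ) = (Aⱼ − ζ)⁻¹`, one has
`R₂(ζ) − R₁(ζ) = (T R₂(ζ̄))* J (T R₁(ζ))` where `T Rⱼ ∈ B(H, 𝔥 × 𝔥)` and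
`J(f₁,f₂) = (f₂,−f₁)`. -/
theorem symplectic_krein_formula
    {H 𝔥 : Type*}
    [NormedAddCommGroup H] [InnerProductSpace ℂ H] [CompleteSpace H]
    [NormedAddCommGroup 𝔥] [InnerProductSpace ℂ 𝔥] [CompleteSpace 𝔥]
    (A : H →ₗ.[ℂ] H)
    (hdense : Dense (A.domain : Set H))
    (hclosed : A.IsClosed)
    (hsym : ∀ u v : A.domain, ⟪A u, (v : H)⟫_ℂ = ⟪(u : H), A v⟫_ℂ)
    (D : Submodule ℂ H)
    (hDsub : D ≤ A.adjoint.domain)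
    (hAD : A.domain ≤ D)
    (T : D →ₗ[ℂ] WithLp 2 (𝔥 × 𝔥))
    (hTdense : DenseRange T)
    (hGreen : ∀ u v : D,
      ⟪A.adjoint ⟨(u : H), hDsub u.2⟩, (v : H)⟫_ℂ
          - ⟪(u : H), A.adjoint ⟨(v : H), hDsub v.2⟩⟫_ℂ
        = ⟪(T u).snd, (T v).fst⟫_ℂ - ⟪(T u).fst, (T v).snd⟫_ℂ)
    -- `A₁`, `A₂`: self-adjoint extensions of `A` with domains contained in `D`
    (A₁ A₂ : H →ₗ.[ℂ] H)
    (hA₁ : A ≤ A₁) (hsa₁ : A₁.adjoint = A₁) (hdom₁ : A₁.domain ≤ D)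
    (hA₂ : A ≤ A₂) (hsa₂ : A₂.adjoint = A₂) (hdom₂ : A₂.domain ≤ D)
    -- `ζ ∉ Spec A₁ ∪ Spec A₂`: bounded two-sided resolvents exist
    (ζ : ℂ) (R₁ R₂ R₂' : H →L[ℂ] H)
    (hm₁ : ∀ f : H, R₁ f ∈ A₁.domain)
    (hr₁ : ∀ f : H, A₁ ⟨R₁ f, hm₁ f⟩ - ζ • R₁ f = f)
    (hr₁' : ∀ u : A₁.domain, R₁ (A₁ u - ζ • (u : H)) = (u : H))
    (hm₂ : ∀ f : H, R₂ f ∈ A₂.domain)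
    (hr₂ : ∀ f : H, A₂ ⟨R₂ f, hm₂ f⟩ - ζ • R₂ f = f)
    (hr₂' : ∀ u : A₂.domain, R₂ (A₂ u - ζ • (u : H)) = (u : H))
    (hm₂' : ∀ f : H, R₂' f ∈ A₂.domain)
    (hr₂c : ∀ f : H, A₂ ⟨R₂' f, hm₂' f⟩ - (starRingEnd ℂ ζ) • R₂' f = f)
    (hr₂c' : ∀ u : A₂.domain, R₂' (A₂ u - (starRingEnd ℂ ζ) • (u : H)) = (u : H))
    -- the bounded trace–resolvent compositions `T R₁(ζ)` and `T R₂(ζ̄)`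
    (TR₁ TR₂' : H →L[ℂ] WithLp 2 (𝔥 × 𝔥))
    (hTR₁ : ∀ f : H, TR₁ f = T ⟨R₁ f, hdom₁ (hm₁ f)⟩)
    (hTR₂' : ∀ f : H, TR₂' f = T ⟨R₂' f, hdom₂ (hm₂' f)⟩) :
    R₂ - R₁ = (ContinuousLinearMap.adjoint TR₂') ∘L (Jsymp 𝔥 ∘L TR₁) := by
  -- densely defined extensions
  have hd₁ : Dense (A₁.domain : Set H) := hdense.mono hA₁.1
  have hd₂ : Dense (A₂.domain : Set H) := hdense.mono hA₂.1
  -- self-adjointness gives symmetry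
  have hfa₁ : A₁.IsFormalAdjoint A₁ := by
    have h := LinearPMap.adjoint_isFormalAdjoint hd₁; rwa [hsa₁] at h
  have hfa₂ : A₂.IsFormalAdjoint A₂ := by
    have h := LinearPMap.adjoint_isFormalAdjoint hd₂; rwa [hsa₂] at h
  -- A₁, A₂ are contained in A.adjoint
  have hAf₁ : A.IsFormalAdjoint A₁ := by
    intro x y
    have hx : (x : H) ∈ A₁.domain := hA₁.1 x.2
    have hA : A x = A₁ ⟨(x : H), hx⟩ := hA₁.2 rfl
    rw [hA]; exact hfa₁ ⟨(x : H), hx⟩ y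
  have hAf₂ : A.IsFormalAdjoint A₂ := by
    intro x y
    have hx : (x : H) ∈ A₂.domain := hA₂.1 x.2
    have hA : A x = A₂ ⟨(x : H), hx⟩ := hA₂.2 rfl
    rw [hA]; exact hfa₂ ⟨(x : H), hx⟩ y
  have hle₁ : A₁ ≤ A.adjoint := hAf₁.le_adjoint hdense
  have hle₂ : A₂ ≤ A.adjoint := hAf₂.le_adjoint hdense
  refine ContinuousLinearMap.ext fun f => ?_
  refine ext_inner_right ℂ fun g => ?_
  -- Green identity applied to u = R₁ f, v = R₂' g
  have green := hGreen ⟨R₁ f, hdom₁ (hm₁ f)⟩ ⟨R₂' g, hdom₂ (hm₂' g)⟩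
  have e₁ : A.adjoint ⟨R₁ f, hDsub (hdom₁ (hm₁ f))⟩ = A₁ ⟨R₁ f, hm₁ f⟩ :=
    (hle₁.2 rfl).symm
  have e₂ : A.adjoint ⟨R₂' g, hDsub (hdom₂ (hm₂' g))⟩ = A₂ ⟨R₂' g, hm₂' g⟩ :=
    (hle₂.2 rfl).symm
  rw [e₁, e₂] at green
  have hA₁u : A₁ ⟨R₁ f, hm₁ f⟩ = f + ζ • R₁ f := sub_eq_iff_eq_add.mp (hr₁ f)
  have hA₂v : A₂ ⟨R₂' g, hm₂' g⟩ = g + (starRingEnd ℂ ζ) • R₂' g :=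
    sub_eq_iff_eq_add.mp (hr₂c g)
  have hA₂u : A₂ ⟨R₂ f, hm₂ f⟩ = f + ζ • R₂ f := sub_eq_iff_eq_add.mp (hr₂ f)
  rw [hA₁u, hA₂v] at green
  simp only [inner_add_left, inner_add_right, inner_smul_left, inner_smul_right] at green
  -- R₂' is the adjoint of R₂
  have hadj : ⟪R₂ f, g⟫_ℂ = ⟪f, R₂' g⟫_ℂ := by
    have h1 : ⟪(A₂ ⟨R₂ f, hm₂ f⟩ : H), R₂' g⟫_ℂ
        = ⟪R₂ f, (A₂ ⟨R₂' g, hm₂' g⟩ : H)⟫_ℂ := hfa₂ ⟨R₂ f, hm₂ f⟩ ⟨R₂' g, hm₂' g⟩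
    rw [hA₂u, hA₂v] at h1
    simp only [inner_add_left, inner_add_right, inner_smul_left, inner_smul_right] at h1
    linear_combination -h1
  -- unfold the right-hand side
  rw [ContinuousLinearMap.sub_apply, inner_sub_left, ContinuousLinearMap.comp_apply,
    ContinuousLinearMap.comp_apply, ContinuousLinearMap.adjoint_inner_left,
    hTR₁ f, hTR₂' g]
  have hJ : ∀ x y : WithLp 2 (𝔥 × 𝔥),
      ⟪Jsymp 𝔥 x, y⟫_ℂ = ⟪x.snd, y.fst⟫_ℂ - ⟪x.fst, y.snd⟫_ℂ := by
    intro x y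
    simp [Jsymp, WithLp.prod_inner_apply, sub_eq_add_neg]
  rw [hJ]
  linear_combination green + hadj
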